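/- For every real α > 1/2 there exists a constant C(α) > 0 such that for all v, w : ℤ → ℂ with ‖v‖_α < ∞ and ‖w‖_α < ∞, the convolution v * w, defined by (v * w)_l = ∑_{i + j = l} v_i w_j, is well defined (each sum converges absolutely), and ‖v * w‖_α ≤ C(α) ‖v‖_α ‖w‖_α. -/

import Mathlib

open scoped ENNReal
open MeasureTheory

-- Cauchy–Schwarz for ENNReal tsums
lemma cs2 (a b : ℤ → ℝ≥0∞) :
    (∑' i, a i * b i) ^ 2 ≤ (∑' i, a i ^ 2) * (∑' i, b i ^ 2) := by
  have hpq : Real.HolderConjugate 2 2 := ⟨by norm_num, by norm_num, by norm_num⟩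
  have h := ENNReal.lintegral_mul_le_Lp_mul_Lq (Measure.count : Measure ℤ) hpq
    (measurable_of_countable a).aemeasurable (measurable_of_countable b).aemeasurable
  simp only [Pi.mul_apply, lintegral_count] at h
  have h2 : ∀ x : ℝ≥0∞, x ^ (2:ℝ) = x ^ 2 := fun x => by
    rw [← ENNReal.rpow_natCast x 2]; norm_num
  simp only [h2] at h
  calc (∑' i, a i * b i) ^ 2
      ≤ ((∑' i, a i ^ 2) ^ (1/(2:ℝ)) * (∑' i, b i ^ 2) ^ (1/(2:ℝ))) ^ 2 := by
        exact pow_le_pow_left' h 2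
    _ = (∑' i, a i ^ 2) * (∑' i, b i ^ 2) := by
        rw [mul_pow, ← ENNReal.rpow_natCast ((∑' i, a i ^ 2) ^ (1/(2:ℝ))),
          ← ENNReal.rpow_natCast ((∑' i, b i ^ 2) ^ (1/(2:ℝ))),
          ← ENNReal.rpow_mul, ← ENNReal.rpow_mul]
        norm_num

-- shift invariance of tsum on ℤ
lemma tsum_shift (g : ℤ → ℝ≥0∞) (l : ℤ) : ∑' i : ℤ, g (l - i) = ∑' j, g j :=
  (Equiv.subLeft l).tsum_eq g

lemma tsum_shift' (g : ℤ → ℝ≥0∞) (i : ℤ) : ∑' l : ℤ, g (l - i) = ∑' j, g j :=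
  (Equiv.subRight i).tsum_eq g

-- Young: ℓ² * ℓ¹ → ℓ²  (squared form)
lemma young (f g : ℤ → ℝ≥0∞) :
    ∑' l : ℤ, (∑' i : ℤ, f i * g (l - i)) ^ 2
      ≤ (∑' i, f i ^ 2) * (∑' j, g j) ^ 2 := by
  have key : ∀ l : ℤ, (∑' i : ℤ, f i * g (l - i)) ^ 2
      ≤ (∑' i, f i ^ 2 * g (l - i)) * (∑' j, g j) := by
    intro l
    have hhalf : ∀ x : ℝ≥0∞, x ^ (1/(2:ℝ)) * x ^ (1/(2:ℝ)) = x := fun x => by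
      rw [← ENNReal.rpow_add_of_nonneg _ _ (by norm_num) (by norm_num)]; norm_num
    have h := cs2 (fun i => f i * g (l - i) ^ (1/(2:ℝ))) (fun i => g (l - i) ^ (1/(2:ℝ)))
    have e1 : ∀ i : ℤ, (f i * g (l - i) ^ (1/(2:ℝ))) * g (l - i) ^ (1/(2:ℝ))
        = f i * g (l - i) := fun i => by rw [mul_assoc, hhalf]
    have e2 : ∀ i : ℤ, (f i * g (l - i) ^ (1/(2:ℝ))) ^ 2 = f i ^ 2 * g (l - i) := fun i => by
      rw [mul_pow, sq (g (l - i) ^ (1/(2:ℝ))), hhalf, sq]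
    have e3 : ∀ i : ℤ, (g (l - i) ^ (1/(2:ℝ))) ^ 2 = g (l - i) := fun i => by
      rw [sq, hhalf]
    simp only [e1, e2, e3] at h
    calc (∑' i : ℤ, f i * g (l - i)) ^ 2
        ≤ (∑' i, f i ^ 2 * g (l - i)) * (∑' i, g (l - i)) := h
      _ = (∑' i, f i ^ 2 * g (l - i)) * (∑' j, g j) := by rw [tsum_shift]
  calc ∑' l : ℤ, (∑' i : ℤ, f i * g (l - i)) ^ 2
      ≤ ∑' l : ℤ, (∑' i, f i ^ 2 * g (l - i)) * (∑' j, g j) := ENNReal.tsum_le_tsum key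
    _ = (∑' j, g j) * ∑' l : ℤ, ∑' i, f i ^ 2 * g (l - i) := by
        rw [ENNReal.tsum_mul_right]; ring
    _ = (∑' j, g j) * ∑' i, f i ^ 2 * ∑' l : ℤ, g (l - i) := by
        rw [ENNReal.tsum_comm]
        exact congrArg _ (tsum_congr fun i => ENNReal.tsum_mul_left)
    _ = (∑' i, f i ^ 2) * (∑' j, g j) ^ 2 := by
        have e : (∑' i : ℤ, f i ^ 2 * ∑' l : ℤ, g (l - i)) = ∑' i : ℤ, f i ^ 2 * ∑' j, g j :=
          tsum_congr fun i => by rw [tsum_shift' g i]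
        rw [e, ENNReal.tsum_mul_right]
        ring

noncomputable def Mw (α : ℝ) (s : ℤ) : ℝ≥0∞ := ENNReal.ofReal ((max |(s : ℝ)| 1) ^ α)

lemma Mw_ne_top (α : ℝ) (s : ℤ) : Mw α s ≠ ⊤ := ENNReal.ofReal_ne_top

lemma one_le_Mw {α : ℝ} (hα : 0 ≤ α) (s : ℤ) : 1 ≤ Mw α s := by
  rw [Mw, ENNReal.one_le_ofReal]
  exact Real.one_le_rpow (le_max_right _ _) hα

lemma Mw_ne_zero {α : ℝ} (hα : 0 ≤ α) (s : ℤ) : Mw α s ≠ 0 :=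
  fun h => by simpa [h] using one_le_Mw hα s

lemma Mw_tri {α : ℝ} (hα : 0 ≤ α) (l i : ℤ) :
    Mw α l ≤ ENNReal.ofReal (2 ^ α) * (Mw α i + Mw α (l - i)) := by
  set a : ℝ := max |(i : ℝ)| 1
  set b : ℝ := max |((l - i : ℤ) : ℝ)| 1
  have ha : (0:ℝ) < a := lt_of_lt_of_le one_pos (le_max_right _ _)
  have hb : (0:ℝ) < b := lt_of_lt_of_le one_pos (le_max_right _ _)
  have h1 : (max |(l : ℝ)| 1) ≤ a + b := by
    apply max_le
    · have : (l : ℝ) = (i : ℝ) + ((l - i : ℤ) : ℝ) := by push_cast; ring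
      calc |(l : ℝ)| = |(i : ℝ) + ((l - i : ℤ) : ℝ)| := by rw [← this]
        _ ≤ |(i : ℝ)| + |((l - i : ℤ) : ℝ)| := abs_add_le _ _
        _ ≤ a + b := add_le_add (le_max_left _ _) (le_max_left _ _)
    · linarith [le_max_right |(i : ℝ)| 1, hb.le]
  have h2 : (max |(l : ℝ)| 1) ^ α ≤ 2 ^ α * (a ^ α + b ^ α) := by
    have hml : (0:ℝ) ≤ max |(l : ℝ)| 1 := le_trans one_pos.le (le_max_right _ _)
    calc (max |(l : ℝ)| 1) ^ α ≤ (a + b) ^ α := Real.rpow_le_rpow hml h1 hα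
      _ ≤ (2 * max a b) ^ α := by
          apply Real.rpow_le_rpow (by positivity) _ hα
          rcases le_total a b with h | h
          · calc a + b ≤ b + b := by linarith
              _ = 2 * b := by ring
              _ ≤ 2 * max a b := by rw [max_eq_right h]
          · calc a + b ≤ a + a := by linarith
              _ = 2 * a := by ring
              _ ≤ 2 * max a b := by rw [max_eq_left h]
      _ = 2 ^ α * (max a b) ^ α := Real.mul_rpow (by norm_num) (by positivity)
      _ ≤ 2 ^ α * (a ^ α + b ^ α) := by
          apply mul_le_mul_of_nonneg_left _ (by positivity)
          rcases le_total a b with h | h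
          · rw [max_eq_right h]
            have : (0:ℝ) ≤ a ^ α := by positivity
            linarith
          · rw [max_eq_left h]
            have : (0:ℝ) ≤ b ^ α := by positivity
            linarith
  calc Mw α l ≤ ENNReal.ofReal (2 ^ α * (a ^ α + b ^ α)) := ENNReal.ofReal_le_ofReal h2
    _ = ENNReal.ofReal (2 ^ α) * (Mw α i + Mw α (l - i)) := by
        rw [ENNReal.ofReal_mul (by positivity), ENNReal.ofReal_add (by positivity) (by positivity)]
        rfl

-- summability of the inverse-square weight
lemma Ksum_lt_top {α : ℝ} (hα : 1/2 < α) : ∑' s : ℤ, ((Mw α s)⁻¹) ^ 2 < ⊤ := by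
  have hα0 : (0:ℝ) ≤ α := by linarith
  have h2α : 1 < 2 * α := by linarith
  -- real summability
  have hg : Summable fun s : ℤ => |(s : ℝ)| ^ (-(2 * α)) := Real.summable_abs_int_rpow h2α
  have hδ : Summable fun s : ℤ => if s = 0 then (1:ℝ) else 0 := ⟨1, hasSum_ite_eq 0 1⟩
  have hsum : Summable fun s : ℤ => (max |(s : ℝ)| 1) ^ (-(2 * α)) := by
    apply (hg.add hδ).congr
    intro s
    by_cases hs : s = 0
    · subst hs
      have hz : ((0:ℤ) : ℝ) = 0 := by norm_num
      rw [hz]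
      rw [abs_zero, Real.zero_rpow (by intro h; simp at h; linarith : -(2*α) ≠ 0)]
      norm_num
    · have h1 : (1:ℝ) ≤ |(s : ℝ)| := by
        rw [← Int.cast_abs]
        exact_mod_cast Int.one_le_abs hs
      simp [hs, max_eq_left h1]
  have hpt : ∀ s : ℤ, ((Mw α s)⁻¹) ^ 2 = ENNReal.ofReal ((max |(s : ℝ)| 1) ^ (-(2 * α))) := by
    intro s
    have hpos : (0:ℝ) < (max |(s : ℝ)| 1) ^ α := by positivity
    rw [Mw, ← ENNReal.ofReal_inv_of_pos hpos, ← ENNReal.ofReal_pow (by positivity)]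
    congr 1
    rw [← Real.rpow_neg (le_trans one_pos.le (le_max_right _ _)), ← Real.rpow_natCast _ 2,
      ← Real.rpow_mul (le_trans one_pos.le (le_max_right _ _))]
    norm_num
    ring_nf
  rw [tsum_congr hpt, ← ENNReal.ofReal_tsum_of_nonneg (fun s => by positivity) hsum]
  exact ENNReal.ofReal_lt_top

lemma conv_comm (f g : ℤ → ℝ≥0∞) (l : ℤ) :
    ∑' i : ℤ, f i * g (l - i) = ∑' j : ℤ, g j * f (l - j) := by
  rw [← (Equiv.subLeft l).tsum_eq (fun i : ℤ => f i * g (l - i))]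
  exact tsum_congr fun j => by
    simp only [Equiv.subLeft_apply, sub_sub_cancel]
    ring

lemma sq4 (a b : ℝ≥0∞) : (a + b) ^ 2 ≤ 4 * (a ^ 2 + b ^ 2) := by
  calc (a + b) ^ 2 ≤ (2 * max a b) ^ 2 := by
        apply pow_le_pow_left'
        rw [two_mul]
        exact add_le_add (le_max_left _ _) (le_max_right _ _)
    _ = 4 * (max a b) ^ 2 := by rw [mul_pow]; norm_num
    _ ≤ 4 * (a ^ 2 + b ^ 2) := by
        apply mul_le_mul_right
        rcases le_total a b with h | h
        · rw [max_eq_right h]; exact le_add_self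
        · rw [max_eq_left h]; exact le_self_add

lemma sq_ofReal_mul_Mw {α : ℝ} (hα0 : 0 ≤ α) {x : ℝ} (hx : 0 ≤ x) (s : ℤ) :
    (ENNReal.ofReal x * Mw α s) ^ 2
      = ENNReal.ofReal (x ^ 2 * (max |(s : ℝ)| 1) ^ (2 * α)) := by
  have hm : (0:ℝ) ≤ max |(s : ℝ)| 1 := le_trans one_pos.le (le_max_right _ _)
  have hr : (x * (max |(s : ℝ)| 1) ^ α) ^ 2 = x ^ 2 * (max |(s : ℝ)| 1) ^ (2 * α) := by
    rw [mul_pow, ← Real.rpow_natCast ((max |(s : ℝ)| 1) ^ α) 2, ← Real.rpow_mul hm]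
    norm_num [mul_comm]
  rw [Mw, ← ENNReal.ofReal_mul hx, ← ENNReal.ofReal_pow (by positivity), hr]

/-- For `α > 1/2` there is `C(α) > 0` such that for all `v, w : ℤ → ℂ`
with finite weighted norms `‖·‖_α` (where `‖v‖_α² = ∑ |v_s|² ⟨s⟩^{2α}`, `⟨s⟩ = max(|s|,1)`),
the convolution `(v * w)_l = ∑_{i+j=l} v_i w_j` is well defined (absolutely convergent),
has finite norm, and `‖v * w‖_α ≤ C(α) ‖v‖_α ‖w‖_α`. -/
theorem stmt_11 (α : ℝ) (hα : 1/2 < α) :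
    ∃ C : ℝ, 0 < C ∧
      ∀ v w : ℤ → ℂ,
        Summable (fun s : ℤ => ‖v s‖^2 * (max |(s : ℝ)| 1) ^ (2*α)) →
        Summable (fun s : ℤ => ‖w s‖^2 * (max |(s : ℝ)| 1) ^ (2*α)) →
        (∀ l : ℤ, Summable (fun i : ℤ => ‖v i * w (l - i)‖)) ∧
        Summable (fun l : ℤ => ‖∑' i : ℤ, v i * w (l - i)‖^2 * (max |(l : ℝ)| 1) ^ (2*α)) ∧
        Real.sqrt (∑' l : ℤ, ‖∑' i : ℤ, v i * w (l - i)‖^2 * (max |(l : ℝ)| 1) ^ (2*α))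
          ≤ C * Real.sqrt (∑' s : ℤ, ‖v s‖^2 * (max |(s : ℝ)| 1) ^ (2*α))
              * Real.sqrt (∑' s : ℤ, ‖w s‖^2 * (max |(s : ℝ)| 1) ^ (2*α)) := by
  have hα0 : (0:ℝ) ≤ α := by linarith
  set K : ℝ≥0∞ := ∑' s : ℤ, ((Mw α s)⁻¹) ^ 2 with hKdef
  have hKtop : K ≠ ⊤ := (Ksum_lt_top hα).ne
  set c2 : ℝ≥0∞ := ENNReal.ofReal (2 ^ α) with hc2def
  have hc2top : c2 ≠ ⊤ := ENNReal.ofReal_ne_top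
  set Bc : ℝ≥0∞ := 8 * c2 ^ 2 * K with hBcdef
  have hBctop : Bc ≠ ⊤ := by
    rw [hBcdef]
    exact ENNReal.mul_ne_top (ENNReal.mul_ne_top (by norm_num) (ENNReal.pow_ne_top hc2top)) hKtop
  refine ⟨max 1 (Real.sqrt Bc.toReal), lt_of_lt_of_le one_pos (le_max_left _ _), ?_⟩
  intro v w hv hw
  set f : ℤ → ℝ≥0∞ := fun s => ENNReal.ofReal ‖v s‖ with hfdef
  set g : ℤ → ℝ≥0∞ := fun s => ENNReal.ofReal ‖w s‖ with hgdef
  set Nv : ℝ≥0∞ := ∑' s : ℤ, (f s * Mw α s) ^ 2 with hNvdef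
  set Nw : ℝ≥0∞ := ∑' s : ℤ, (g s * Mw α s) ^ 2 with hNwdef
  have hNv : Nv = ENNReal.ofReal (∑' s : ℤ, ‖v s‖^2 * (max |(s : ℝ)| 1) ^ (2*α)) := by
    rw [hNvdef, ENNReal.ofReal_tsum_of_nonneg (fun s => by positivity) hv]
    exact tsum_congr fun s => sq_ofReal_mul_Mw hα0 (norm_nonneg _) s
  have hNw : Nw = ENNReal.ofReal (∑' s : ℤ, ‖w s‖^2 * (max |(s : ℝ)| 1) ^ (2*α)) := by
    rw [hNwdef, ENNReal.ofReal_tsum_of_nonneg (fun s => by positivity) hw]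
    exact tsum_congr fun s => sq_ofReal_mul_Mw hα0 (norm_nonneg _) s
  have hNvtop : Nv ≠ ⊤ := by rw [hNv]; exact ENNReal.ofReal_ne_top
  have hNwtop : Nw ≠ ⊤ := by rw [hNw]; exact ENNReal.ofReal_ne_top
  -- ℓ² bounds without weight
  have hf2 : ∑' i : ℤ, f i ^ 2 ≤ Nv :=
    ENNReal.tsum_le_tsum fun i =>
      pow_le_pow_left' (le_mul_of_one_le_right' (one_le_Mw hα0 i)) 2
  have hg2 : ∑' i : ℤ, g i ^ 2 ≤ Nw :=
    ENNReal.tsum_le_tsum fun i =>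
      pow_le_pow_left' (le_mul_of_one_le_right' (one_le_Mw hα0 i)) 2
  -- ℓ¹ bounds
  have hl1 : ∀ (u : ℤ → ℝ≥0∞), (∑' j, u j) ^ 2 ≤ (∑' j, (u j * Mw α j) ^ 2) * K := by
    intro u
    have e : ∀ j : ℤ, (u j * Mw α j) * (Mw α j)⁻¹ = u j := fun j => by
      rw [mul_assoc, ENNReal.mul_inv_cancel (Mw_ne_zero hα0 j) (Mw_ne_top α j), mul_one]
    calc (∑' j, u j) ^ 2 = (∑' j, (u j * Mw α j) * (Mw α j)⁻¹) ^ 2 := by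
          rw [tsum_congr e]
      _ ≤ (∑' j, (u j * Mw α j) ^ 2) * ∑' j, ((Mw α j)⁻¹) ^ 2 := cs2 _ _
  have hGsq : (∑' j, g j) ^ 2 ≤ Nw * K := hl1 g
  have hFsq : (∑' j, f j) ^ 2 ≤ Nv * K := hl1 f
  -- convolution absolute convergence
  set F : ℤ → ℝ≥0∞ := fun l => ∑' i : ℤ, f i * g (l - i) with hFdef
  have hFl : ∀ l, (F l) ^ 2 ≤ Nv * Nw := by
    intro l
    calc (F l) ^ 2 ≤ (∑' i, f i ^ 2) * (∑' i, (g (l - i)) ^ 2) := cs2 _ _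
      _ = (∑' i, f i ^ 2) * (∑' j, g j ^ 2) := by
          rw [tsum_shift (fun j => g j ^ 2) l]
      _ ≤ Nv * Nw := mul_le_mul' hf2 hg2
  have hFfin : ∀ l, F l ≠ ⊤ := by
    intro l h
    have h2 : (F l) ^ 2 < ⊤ :=
      lt_of_le_of_lt (hFl l) (ENNReal.mul_lt_top hNvtop.lt_top hNwtop.lt_top)
    rw [h, ENNReal.top_pow (by norm_num : 2 ≠ 0)] at h2
    exact lt_irrefl _ h2
  have hofR : ∀ l i : ℤ, ENNReal.ofReal ‖v i * w (l - i)‖ = f i * g (l - i) := by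
    intro l i
    rw [norm_mul, ENNReal.ofReal_mul (norm_nonneg _)]
  have hsum1 : ∀ l : ℤ, Summable fun i : ℤ => ‖v i * w (l - i)‖ := by
    intro l
    have h1 : (∑' i : ℤ, ENNReal.ofReal ‖v i * w (l - i)‖) ≠ ⊤ := by
      rw [tsum_congr (hofR l)]; exact hFfin l
    exact (ENNReal.summable_toReal h1).congr fun i =>
      ENNReal.toReal_ofReal (norm_nonneg _)
  refine ⟨hsum1, ?_⟩
  -- bound on the norm of the convolution
  have hT : ∀ l : ℤ, ENNReal.ofReal ‖∑' i : ℤ, v i * w (l - i)‖ ≤ F l := by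
    intro l
    calc ENNReal.ofReal ‖∑' i : ℤ, v i * w (l - i)‖
        ≤ ENNReal.ofReal (∑' i : ℤ, ‖v i * w (l - i)‖) :=
          ENNReal.ofReal_le_ofReal (norm_tsum_le_tsum_norm (hsum1 l))
      _ = ∑' i : ℤ, ENNReal.ofReal ‖v i * w (l - i)‖ :=
          ENNReal.ofReal_tsum_of_nonneg (fun i => norm_nonneg _) (hsum1 l)
      _ = F l := tsum_congr (hofR l)
  -- main estimate
  set f' : ℤ → ℝ≥0∞ := fun i => f i * Mw α i with hf'def
  set g' : ℤ → ℝ≥0∞ := fun i => g i * Mw α i with hg'def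
  set A : ℤ → ℝ≥0∞ := fun l => ∑' i : ℤ, f' i * g (l - i) with hAdef
  set B : ℤ → ℝ≥0∞ := fun l => ∑' i : ℤ, f i * g' (l - i) with hBdef
  have hMl : ∀ l : ℤ, Mw α l * F l ≤ c2 * (A l + B l) := by
    intro l
    calc Mw α l * F l = ∑' i : ℤ, Mw α l * (f i * g (l - i)) := ENNReal.tsum_mul_left.symm
      _ ≤ ∑' i : ℤ, (c2 * (Mw α i + Mw α (l - i))) * (f i * g (l - i)) :=
          ENNReal.tsum_le_tsum fun i => mul_le_mul_left (Mw_tri hα0 l i) _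
      _ = ∑' i : ℤ, c2 * (f' i * g (l - i) + f i * g' (l - i)) := by
          refine tsum_congr fun i => ?_
          simp only [hf'def, hg'def]
          ring
      _ = c2 * (A l + B l) := by
          rw [ENNReal.tsum_mul_left, ENNReal.tsum_add]
  set S : ℝ≥0∞ := ∑' l : ℤ, (ENNReal.ofReal ‖∑' i : ℤ, v i * w (l - i)‖ * Mw α l) ^ 2
    with hSdef
  have hS : S ≤ Bc * (Nv * Nw) := by
    have hAsq : ∑' l, A l ^ 2 ≤ Nv * (Nw * K) := by
      calc ∑' l, A l ^ 2 ≤ (∑' i, f' i ^ 2) * (∑' j, g j) ^ 2 := young f' g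
        _ ≤ Nv * (Nw * K) := mul_le_mul' le_rfl hGsq
    have hBsq : ∑' l, B l ^ 2 ≤ Nw * (Nv * K) := by
      have hB' : ∀ l, B l = ∑' j : ℤ, g' j * f (l - j) := fun l => conv_comm f g' l
      calc ∑' l, B l ^ 2 = ∑' l, (∑' j : ℤ, g' j * f (l - j)) ^ 2 := by
            exact tsum_congr fun l => by rw [hB' l]
        _ ≤ (∑' j, g' j ^ 2) * (∑' j, f j) ^ 2 := young g' f
        _ ≤ Nw * (Nv * K) := mul_le_mul' le_rfl hFsq
    calc S ≤ ∑' l : ℤ, (Mw α l * F l) ^ 2 := by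
          refine ENNReal.tsum_le_tsum fun l => pow_le_pow_left' ?_ 2
          exact le_trans (le_of_eq (mul_comm _ _)) (mul_le_mul_right (hT l) _)
      _ ≤ ∑' l : ℤ, (c2 * (A l + B l)) ^ 2 :=
          ENNReal.tsum_le_tsum fun l => pow_le_pow_left' (hMl l) 2
      _ = ∑' l : ℤ, c2 ^ 2 * (A l + B l) ^ 2 := by
          exact tsum_congr fun l => by rw [mul_pow]
      _ ≤ ∑' l : ℤ, c2 ^ 2 * (4 * (A l ^ 2 + B l ^ 2)) :=
          ENNReal.tsum_le_tsum fun l => mul_le_mul_right (sq4 _ _) _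
      _ = c2 ^ 2 * 4 * ((∑' l, A l ^ 2) + ∑' l, B l ^ 2) := by
          rw [← ENNReal.tsum_add]
          rw [← ENNReal.tsum_mul_left]
          exact tsum_congr fun l => by ring
      _ ≤ c2 ^ 2 * 4 * (Nv * (Nw * K) + Nw * (Nv * K)) :=
          mul_le_mul_right (add_le_add hAsq hBsq) _
      _ = Bc * (Nv * Nw) := by rw [hBcdef]; ring
  have hStop : S ≠ ⊤ :=
    (lt_of_le_of_lt hS (ENNReal.mul_lt_top hBctop.lt_top
      (ENNReal.mul_lt_top hNvtop.lt_top hNwtop.lt_top))).ne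
  -- pointwise identification of the real terms
  have hpt : ∀ l : ℤ, ‖∑' i : ℤ, v i * w (l - i)‖^2 * (max |(l : ℝ)| 1) ^ (2*α)
      = ((ENNReal.ofReal ‖∑' i : ℤ, v i * w (l - i)‖ * Mw α l) ^ 2).toReal := by
    intro l
    rw [sq_ofReal_mul_Mw hα0 (norm_nonneg _) l, ENNReal.toReal_ofReal (by positivity)]
  have hsum2 : Summable (fun l : ℤ =>
      ‖∑' i : ℤ, v i * w (l - i)‖^2 * (max |(l : ℝ)| 1) ^ (2*α)) := by
    exact (ENNReal.summable_toReal hStop).congr fun l => (hpt l).symm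
  refine ⟨hsum2, ?_⟩
  -- final inequality
  have hSreal : (∑' l : ℤ, ‖∑' i : ℤ, v i * w (l - i)‖^2 * (max |(l : ℝ)| 1) ^ (2*α))
      = S.toReal := by
    rw [hSdef, ENNReal.tsum_toReal_eq (fun l => by
      rw [sq_ofReal_mul_Mw hα0 (norm_nonneg _) l]; exact ENNReal.ofReal_ne_top)]
    exact tsum_congr hpt
  have hvreal : (∑' s : ℤ, ‖v s‖^2 * (max |(s : ℝ)| 1) ^ (2*α)) = Nv.toReal := by
    rw [hNv, ENNReal.toReal_ofReal (tsum_nonneg fun s => by positivity)]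
  have hwreal : (∑' s : ℤ, ‖w s‖^2 * (max |(s : ℝ)| 1) ^ (2*α)) = Nw.toReal := by
    rw [hNw, ENNReal.toReal_ofReal (tsum_nonneg fun s => by positivity)]
  rw [hSreal, hvreal, hwreal]
  have hfin : Bc * (Nv * Nw) ≠ ⊤ :=
    ENNReal.mul_ne_top hBctop (ENNReal.mul_ne_top hNvtop hNwtop)
  have h1 : S.toReal ≤ Bc.toReal * Nv.toReal * Nw.toReal := by
    calc S.toReal ≤ (Bc * (Nv * Nw)).toReal := ENNReal.toReal_mono hfin hS
      _ = Bc.toReal * Nv.toReal * Nw.toReal := by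
          simp only [ENNReal.toReal_mul]; ring
  calc Real.sqrt S.toReal ≤ Real.sqrt (Bc.toReal * Nv.toReal * Nw.toReal) :=
        Real.sqrt_le_sqrt h1
    _ = Real.sqrt Bc.toReal * Real.sqrt Nv.toReal * Real.sqrt Nw.toReal := by
        rw [Real.sqrt_mul (by positivity), Real.sqrt_mul ENNReal.toReal_nonneg]
    _ ≤ max 1 (Real.sqrt Bc.toReal) * Real.sqrt Nv.toReal * Real.sqrt Nw.toReal := by
        exact mul_le_mul_of_nonneg_right
          (mul_le_mul_of_nonneg_right (le_max_right _ _) (Real.sqrt_nonneg _))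
          (Real.sqrt_nonneg _)
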